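/- Fix a prime p ≥ 5. Let f be a binary cubic form over ℤ_p that is nondegenerate modulo p, and let h ∈ M₂(ℤ_p) with det(h) ≠ 0 be such that f·h has coefficients in ℤ_p. Let val(h) be the largest integer n such that p^{−n}h ∈ M₂(ℤ_p), and let c = c(f·h) be the content valuation of f·h. Then val(h) = c if and only if the reduction modulo p of the primitive form p^{−c}·(f·h) is NOT of the form α·ℓ(x, y)³ for a unit α ∈ 𝔽_p^× and a nonzero linear form ℓ over 𝔽_p. -/

import Mathlib

set_option autoImplicit false
set_option maxHeartbeats 2000000

/-!
For a binary cubic form `f` over `ℤ_p` nondegenerate mod `p` and `h ∈ M₂(ℤ_p)` with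
`det h ≠ 0` such that `F = f·h` is integral: `val(h) = c(F)` if and only if the
reduction mod `p` of the primitive form `p^{−c}F` is not of the shape `α·ℓ(x,y)³`.
-/

/-- The reduction map `ℤ_p → 𝔽̄_p`. -/
noncomputable def redBar (p : ℕ) [Fact p.Prime] (x : ℤ_[p]) : AlgebraicClosure (ZMod p) :=
  algebraMap (ZMod p) (AlgebraicClosure (ZMod p)) (PadicInt.toZMod x)

/-- The binary cubic form with coefficients `f 0, f 1, f 2, f 3 ∈ ℤ_p` is
nondegenerate modulo `p`: its reduction mod `p` is nonzero and has no repeated linear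
factor over an algebraic closure of `𝔽_p` (it is not `(αx + βy)²(γx + δy)`). -/
def NondegPadic (p : ℕ) [Fact p.Prime] (f : Fin 4 → ℤ_[p]) : Prop :=
  ¬(PadicInt.toZMod (f 0) = 0 ∧ PadicInt.toZMod (f 1) = 0 ∧ PadicInt.toZMod (f 2) = 0 ∧
      PadicInt.toZMod (f 3) = 0) ∧
    ¬∃ α β γ δ : AlgebraicClosure (ZMod p),
        redBar p (f 0) = α ^ 2 * γ ∧
        redBar p (f 1) = α ^ 2 * δ + 2 * α * β * γ ∧
        redBar p (f 2) = 2 * α * β * δ + β ^ 2 * γ ∧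
        redBar p (f 3) = β ^ 2 * δ

/-- Evaluation of the binary cubic form with coefficient quadruple `q` over `ℚ_p`. -/
noncomputable def evalCubic (p : ℕ) [Fact p.Prime] (q : Fin 4 → ℚ_[p]) (x y : ℚ_[p]) : ℚ_[p] :=
  q 0 * x ^ 3 + q 1 * x ^ 2 * y + q 2 * x * y ^ 2 + q 3 * y ^ 3

/-! ### Auxiliary algebra on binary cubic quadruples -/

section CompAlgebra

variable {R : Type*} [CommRing R]

/-- Coefficients of the binary cubic form `q` composed with the row-vector action of `M`. -/
def comp2 (q : Fin 4 → R) (M : Matrix (Fin 2) (Fin 2) R) : Fin 4 → R :=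
![ q 0 * M 0 0^3 + q 1 * M 0 0^2 * M 0 1 + q 2 * M 0 0 * M 0 1^2 + q 3 * M 0 1^3,
   3*q 0*M 0 0^2*M 1 0 + q 1*(M 0 0^2*M 1 1 + 2*M 0 0*M 1 0*M 0 1) + q 2*(2*M 0 0*M 0 1*M 1 1 + M 0 1^2*M 1 0) + 3*q 3*M 0 1^2*M 1 1,
   3*q 0*M 0 0*M 1 0^2 + q 1*(2*M 0 0*M 1 0*M 1 1 + M 0 1*M 1 0^2) + q 2*(M 0 0*M 1 1^2 + 2*M 0 1*M 1 0*M 1 1) + 3*q 3*M 0 1*M 1 1^2,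
   q 0*M 1 0^3 + q 1*M 1 0^2*M 1 1 + q 2*M 1 0*M 1 1^2 + q 3*M 1 1^3 ]

/-- 2×2 adjugate. -/
def adj2 (M : Matrix (Fin 2) (Fin 2) R) : Matrix (Fin 2) (Fin 2) R :=
  Matrix.of ![![M 1 1, -(M 0 1)], ![-(M 1 0), M 0 0]]

/-- 2×2 determinant, explicitly. -/
def det2 (M : Matrix (Fin 2) (Fin 2) R) : R := M 0 0 * M 1 1 - M 0 1 * M 1 0

/-- Coefficients of the cube `α(βx+γy)³`. -/
def cub2 (α β γ : R) : Fin 4 → R := ![α*β^3, 3*α*β^2*γ, 3*α*β*γ^2, α*γ^3]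

/-- Coefficients of `(αx+βy)²(γx+δy)`. -/
def pat2 (α β γ δ : R) : Fin 4 → R :=
  ![α^2*γ, α^2*δ + 2*α*β*γ, 2*α*β*δ + β^2*γ, β^2*δ]

lemma comp2_mul (q : Fin 4 → R) (M N : Matrix (Fin 2) (Fin 2) R) :
    comp2 q (M * N) = comp2 (comp2 q N) M := by
  funext i
  fin_cases i <;> simp [comp2, Matrix.mul_apply, Fin.sum_univ_two] <;> ring

lemma comp2_adj2 (q : Fin 4 → R) (M : Matrix (Fin 2) (Fin 2) R) :
    comp2 (comp2 q M) (adj2 M) = fun i => (det2 M)^3 * q i := by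
  funext i
  fin_cases i <;> simp [comp2, adj2, det2] <;> ring

lemma adj2_comp2 (q : Fin 4 → R) (M : Matrix (Fin 2) (Fin 2) R) :
    comp2 (comp2 q (adj2 M)) M = fun i => (det2 M)^3 * q i := by
  funext i
  fin_cases i <;> simp [comp2, adj2, det2] <;> ring

lemma comp2_const_mul (r : R) (q : Fin 4 → R) (M : Matrix (Fin 2) (Fin 2) R) :
    comp2 (fun j => r * q j) M = fun i => r * comp2 q M i := by
  funext i
  fin_cases i <;> simp [comp2] <;> ring

lemma comp2_smul (s : R) (q : Fin 4 → R) (M : Matrix (Fin 2) (Fin 2) R) :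
    comp2 q (s • M) = fun i => s^3 * comp2 q M i := by
  funext i
  fin_cases i <;> simp [comp2, Matrix.smul_apply, smul_eq_mul] <;> ring

lemma comp2_map {S : Type*} [CommRing S] (φ : R →+* S) (q : Fin 4 → R)
    (M : Matrix (Fin 2) (Fin 2) R) (i : Fin 4) :
    φ (comp2 q M i) = comp2 (fun j => φ (q j)) (M.map φ) i := by
  fin_cases i <;> simp [comp2, Matrix.map_apply, map_ofNat]

lemma comp2_cub2 (α β γ : R) (M : Matrix (Fin 2) (Fin 2) R) :
    comp2 (cub2 α β γ) M = cub2 α (β*M 0 0 + γ*M 0 1) (β*M 1 0 + γ*M 1 1) := by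
  funext i; fin_cases i <;> simp [comp2, cub2] <;> ring

lemma comp2_pat2 (α β γ δ : R) (M : Matrix (Fin 2) (Fin 2) R) :
    comp2 (pat2 α β γ δ) M
      = pat2 (α*M 0 0 + β*M 0 1) (α*M 1 0 + β*M 1 1) (γ*M 0 0 + δ*M 0 1) (γ*M 1 0 + δ*M 1 1) := by
  funext i; fin_cases i <;> simp [comp2, pat2] <;> ring

lemma smul_cub2 (s α β γ : R) : (fun i => s * cub2 α β γ i) = cub2 (s*α) β γ := by
  funext i; fin_cases i <;> simp [cub2] <;> ring

lemma smul_pat2 (s α β γ δ : R) : (fun i => s * pat2 α β γ δ i) = pat2 α β (s*γ) (s*δ) := by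
  funext i; fin_cases i <;> simp [pat2] <;> ring

lemma map_cub2 {S : Type*} [CommRing S] (φ : R →+* S) (α β γ : R) (i : Fin 4) :
    φ (cub2 α β γ i) = cub2 (φ α) (φ β) (φ γ) i := by
  fin_cases i <;> simp [cub2, map_ofNat]

lemma comp2_diag (q : Fin 4 → R) (d : R) :
    comp2 q (Matrix.of ![![1, 0], ![0, d]]) = ![q 0, q 1 * d, q 2 * d^2, q 3 * d^3] := by
  funext i; fin_cases i <;> simp [comp2] <;> ring

lemma adj2_map {S : Type*} [CommRing S] (φ : R →+* S) (M : Matrix (Fin 2) (Fin 2) R) :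
    (adj2 M).map φ = adj2 (M.map φ) := by
  ext i j
  fin_cases i <;> fin_cases j <;> simp [adj2, Matrix.map_apply]

lemma det2_mul (A B : Matrix (Fin 2) (Fin 2) R) : det2 (A * B) = det2 A * det2 B := by
  simp [det2, Matrix.mul_apply, Fin.sum_univ_two]; ring

lemma det2_diag (d : R) : det2 (Matrix.of ![![1, 0], ![0, d]]) = d := by
  simp [det2]

lemma det2_adj2 (M : Matrix (Fin 2) (Fin 2) R) : det2 (adj2 M) = det2 M := by
  simp [det2, adj2]; ring

lemma det2_map {S : Type*} [CommRing S] (φ : R →+* S) (M : Matrix (Fin 2) (Fin 2) R) :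
    φ (det2 M) = det2 (M.map φ) := by
  simp [det2, Matrix.map_apply]

lemma det2_smul (s : R) (M : Matrix (Fin 2) (Fin 2) R) : det2 (s • M) = s^2 * det2 M := by
  simp [det2, Matrix.smul_apply, smul_eq_mul]; ring

/-- Smith decomposition of a 2×2 matrix with a unit entry. -/
lemma smith2 (M : Matrix (Fin 2) (Fin 2) R) (hM : ∃ i j, IsUnit (M i j)) :
    ∃ (u w : Matrix (Fin 2) (Fin 2) R) (d : R), IsUnit (det2 u) ∧ IsUnit (det2 w) ∧
      M = u * Matrix.of ![![1, 0], ![0, d]] * w := by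
  obtain ⟨i, j, hu⟩ := hM
  obtain ⟨x, hx⟩ := hu.exists_right_inv
  fin_cases i <;> fin_cases j
  · have hx' : M 0 0 * x = 1 := hx
    refine ⟨Matrix.of ![![M 0 0, 0], ![M 1 0, 1]], Matrix.of ![![1, x * M 0 1], ![0, 1]],
      x * det2 M, by simpa [det2] using hu, by simp [det2], ?_⟩
    ext i j
    fin_cases i <;> fin_cases j <;>
      simp [Matrix.mul_apply, Fin.sum_univ_two, det2]
    · linear_combination (-M 0 1) * hx'
    · linear_combination (-M 1 1) * hx'
  · have hx' : M 0 1 * x = 1 := hx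
    refine ⟨Matrix.of ![![M 0 1, 0], ![M 1 1, 1]], Matrix.of ![![x * M 0 0, 1], ![1, 0]],
      -(x * det2 M), by simpa [det2] using hu, by simp [det2], ?_⟩
    ext i j
    fin_cases i <;> fin_cases j <;>
      simp [Matrix.mul_apply, Fin.sum_univ_two, det2]
    · linear_combination (-M 0 0) * hx'
    · linear_combination (-M 1 0) * hx'
  · have hx' : M 1 0 * x = 1 := hx
    refine ⟨Matrix.of ![![M 0 0, 1], ![M 1 0, 0]], Matrix.of ![![1, x * M 1 1], ![0, 1]],
      -(x * det2 M), by simpa [det2] using hu.neg, by simp [det2], ?_⟩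
    ext i j
    fin_cases i <;> fin_cases j <;>
      simp [Matrix.mul_apply, Fin.sum_univ_two, det2]
    · linear_combination (-M 0 1) * hx'
    · linear_combination (-M 1 1) * hx'
  · have hx' : M 1 1 * x = 1 := hx
    refine ⟨Matrix.of ![![M 0 1, 1], ![M 1 1, 0]], Matrix.of ![![x * M 1 0, 1], ![1, 0]],
      x * det2 M, by simpa [det2] using hu.neg, by simp [det2], ?_⟩
    ext i j
    fin_cases i <;> fin_cases j <;>
      simp [Matrix.mul_apply, Fin.sum_univ_two, det2]
    · linear_combination (-M 0 0) * hx'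
    · linear_combination (-M 1 0) * hx'

end CompAlgebra

/-! ### Cube shapes over a field -/

section Cube

variable {K : Type*} [Field K]

/-- `q` is a nonzero cube `α·ℓ(x,y)³`. -/
def IsCube (q : Fin 4 → K) : Prop :=
  ∃ α β γ : K, α ≠ 0 ∧ ¬(β = 0 ∧ γ = 0) ∧ q = cub2 α β γ

lemma isCube_comp2 {q : Fin 4 → K} {M : Matrix (Fin 2) (Fin 2) K} (hM : det2 M ≠ 0)
    (hq : IsCube q) : IsCube (comp2 q M) := by
  obtain ⟨α, β, γ, hα, hβγ, rfl⟩ := hq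
  refine ⟨α, β*M 0 0 + γ*M 0 1, β*M 1 0 + γ*M 1 1, hα, ?_, comp2_cub2 α β γ M⟩
  rintro ⟨h1, h2⟩
  apply hβγ
  constructor
  · have : β * det2 M = 0 := by
      rw [det2]; linear_combination M 1 1 * h1 - M 0 1 * h2
    exact (mul_eq_zero.mp this).resolve_right hM
  · have : γ * det2 M = 0 := by
      rw [det2]; linear_combination M 0 0 * h2 - M 1 0 * h1
    exact (mul_eq_zero.mp this).resolve_right hM

lemma isCube_of_smul {s : K} (hs : s ≠ 0) {q : Fin 4 → K}
    (hq : IsCube (fun i => s * q i)) : IsCube q := by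
  obtain ⟨α, β, γ, hα, hβγ, hc⟩ := hq
  refine ⟨s⁻¹ * α, β, γ, mul_ne_zero (inv_ne_zero hs) hα, hβγ, ?_⟩
  rw [← smul_cub2]
  funext i
  rw [← congrFun hc i, inv_mul_cancel_left₀ hs]

lemma isCube_smul {s : K} (hs : s ≠ 0) {q : Fin 4 → K} (hq : IsCube q) :
    IsCube (fun i => s * q i) := by
  obtain ⟨α, β, γ, hα, hβγ, rfl⟩ := hq
  exact ⟨s * α, β, γ, mul_ne_zero hs hα, hβγ, smul_cub2 s α β γ⟩

lemma cub2_pat2 {L : Type*} [Field L] [IsAlgClosed L] (α β γ : L) :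
    ∃ A B C D : L, cub2 α β γ = pat2 A B C D := by
  obtain ⟨μ, hμ⟩ := IsAlgClosed.exists_pow_nat_eq α (n := 3) (by norm_num)
  refine ⟨μ*β, μ*γ, μ*β, μ*γ, ?_⟩
  funext i; fin_cases i
  · simp [cub2, pat2]; linear_combination (-β^3) * hμ
  · simp [cub2, pat2]; linear_combination (-3*β^2*γ) * hμ
  · simp [cub2, pat2]; linear_combination (-3*β*γ^2) * hμ
  · simp [cub2, pat2]; linear_combination (-γ^3) * hμ

end Cube

/-! ### p-adic helper lemmas -/

section Padic

variable {p : ℕ} [Fact p.Prime]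

lemma isUnit_iff_not_dvd' (x : ℤ_[p]) : IsUnit x ↔ ¬ (p : ℤ_[p]) ∣ x := by
  rw [← PadicInt.norm_lt_one_iff_dvd, PadicInt.isUnit_iff]
  constructor
  · intro h1 hlt; rw [h1] at hlt; exact lt_irrefl _ hlt
  · intro h; rcases lt_or_eq_of_le (PadicInt.norm_le_one x) with h' | h'
    · exact absurd h' h
    · exact h'

lemma toZMod_eq_zero_iff' (x : ℤ_[p]) : PadicInt.toZMod x = 0 ↔ (p : ℤ_[p]) ∣ x := by
  rw [← RingHom.mem_ker, PadicInt.ker_toZMod, IsLocalRing.mem_maximalIdeal,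
    mem_nonunits_iff, isUnit_iff_not_dvd', not_not]

lemma p_ne_zero' : (p : ℤ_[p]) ≠ 0 :=
  Nat.cast_ne_zero.mpr (Fact.out : p.Prime).ne_zero

lemma toZMod_unit_ne_zero {x : ℤ_[p]} (hx : IsUnit x) : PadicInt.toZMod x ≠ 0 := by
  intro h0
  rw [toZMod_eq_zero_iff'] at h0
  exact (isUnit_iff_not_dvd' x).mp hx h0

lemma eval_comp2' (q : Fin 4 → ℚ_[p]) (M : Matrix (Fin 2) (Fin 2) ℚ_[p]) (x y : ℚ_[p]) :
    evalCubic p (comp2 q M) x y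
      = evalCubic p q (x * M 0 0 + y * M 1 0) (x * M 0 1 + y * M 1 1) := by
  simp [evalCubic, comp2]; ring

lemma eval_const_mul (r : ℚ_[p]) (q : Fin 4 → ℚ_[p]) (x y : ℚ_[p]) :
    evalCubic p (fun i => r * q i) x y = r * evalCubic p q x y := by
  simp [evalCubic]; ring

lemma eval_cancel (q r : Fin 4 → ℚ_[p]) (hqr : ∀ x y, evalCubic p q x y = evalCubic p r x y) :
    q = r := by
  have h10 := hqr 1 0
  have h01 := hqr 0 1
  have h11 := hqr 1 1
  have h1m := hqr 1 (-1)
  simp only [evalCubic, one_pow, mul_one, mul_zero, zero_pow, mul_neg, neg_neg,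
    add_zero, zero_add, mul_one] at h10 h01 h11 h1m
  have e0 : q 0 = r 0 := by linear_combination h10
  have e1 : q 1 = r 1 := by linear_combination h11/2 - h1m/2 - h01
  have e2 : q 2 = r 2 := by linear_combination h11/2 + h1m/2 - h10
  have e3 : q 3 = r 3 := by linear_combination h01
  funext i
  fin_cases i
  · exact e0
  · exact e1
  · exact e2
  · exact e3

end Padic

/-- Fix a prime `p ≥ 5`.  Let `f` be a binary cubic form over `ℤ_p` nondegenerate
modulo `p`, let `h ∈ M₂(ℤ_p)` with `det h ≠ 0` and suppose `F = f·h` (where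
`(f·h)(x,y) = det(h)⁻¹ f((x,y)h)`) has coefficients in `ℤ_p`.  Let `v = val(h)` be the
largest integer with `p^{−v}h ∈ M₂(ℤ_p)`, let `c = c(F)` be the content valuation of
`F`, and write `F = p^c F₀`.  Then `v = c` if and only if the reduction of `F₀`
modulo `p` is NOT of the form `α·ℓ(x,y)³` with `α ∈ 𝔽_p^×` and `ℓ` a nonzero linear
form over `𝔽_p`. -/
theorem val_eq_content_iff_not_cube (p : ℕ) [Fact p.Prime] (hp5 : 5 ≤ p)
    (f : Fin 4 → ℤ_[p]) (hf : NondegPadic p f)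
    (h : Matrix (Fin 2) (Fin 2) ℤ_[p]) (hdet : h.det ≠ 0)
    (F : Fin 4 → ℤ_[p])
    (hF : ∀ x y : ℚ_[p],
      evalCubic p (fun i => (F i : ℚ_[p])) x y
        = ((h.det : ℚ_[p]))⁻¹ *
            evalCubic p (fun i => (f i : ℚ_[p]))
              (x * (h 0 0 : ℚ_[p]) + y * (h 1 0 : ℚ_[p]))
              (x * (h 0 1 : ℚ_[p]) + y * (h 1 1 : ℚ_[p])))
    (v : ℕ)
    (hv : (∀ i j, (p : ℤ_[p]) ^ v ∣ h i j) ∧ ¬∀ i j, (p : ℤ_[p]) ^ (v + 1) ∣ h i j)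
    (c : ℕ)
    (hc : (∀ i, (p : ℤ_[p]) ^ c ∣ F i) ∧ ¬∀ i, (p : ℤ_[p]) ^ (c + 1) ∣ F i)
    (F0 : Fin 4 → ℤ_[p]) (hF0 : ∀ i, F i = (p : ℤ_[p]) ^ c * F0 i) :
    v = c ↔
      ¬∃ α β γ : ZMod p, α ≠ 0 ∧ ¬(β = 0 ∧ γ = 0) ∧
        PadicInt.toZMod (F0 0) = α * β ^ 3 ∧
        PadicInt.toZMod (F0 1) = 3 * α * β ^ 2 * γ ∧
        PadicInt.toZMod (F0 2) = 3 * α * β * γ ^ 2 ∧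
        PadicInt.toZMod (F0 3) = α * γ ^ 3 := by
  classical
  have hprime : p.Prime := Fact.out
  set φ : ℤ_[p] →+* ZMod p := @PadicInt.toZMod p _ with hφdef
  set χ : ZMod p →+* AlgebraicClosure (ZMod p) :=
    algebraMap (ZMod p) (AlgebraicClosure (ZMod p)) with hχdef
  have hχinj : Function.Injective χ := χ.injective
  -- p^n ≠ 0 in ℤ_p
  have hpne : (p : ℤ_[p]) ≠ 0 := p_ne_zero'
  have hppow : ∀ n : ℕ, ((p : ℤ_[p]))^n ≠ 0 := fun n => pow_ne_zero n hpne
  have hφp : φ ((p : ℕ) : ℤ_[p]) = 0 := by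
    rw [map_natCast, ZMod.natCast_self]
  -- prime element
  have hpprime : Prime ((p : ℕ) : ℤ_[p]) := PadicInt.prime_p
  ------------------------------------------------------------------
  -- Step A : coefficient identity det h * F = comp2 f h over ℤ_p
  ------------------------------------------------------------------
  have coeinj : ∀ a b : ℤ_[p], (a : ℚ_[p]) = (b : ℚ_[p]) → a = b := fun a b hab =>
    Subtype.ext hab
  have hι : ∀ x : ℤ_[p], (PadicInt.Coe.ringHom : ℤ_[p] →+* ℚ_[p]) x = (x : ℚ_[p]) :=
    fun _ => rfl
  have hdetQ : ((h.det : ℤ_[p]) : ℚ_[p]) ≠ 0 := by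
    intro h0
    exact hdet (coeinj _ 0 (by simpa using h0))
  have keyA : ∀ i, h.det * F i = comp2 f h i := by
    have hQ : (fun i => ((h.det : ℤ_[p]) : ℚ_[p]) * (F i : ℚ_[p]))
        = comp2 (fun i => ((f i : ℤ_[p]) : ℚ_[p])) (h.map (PadicInt.Coe.ringHom)) := by
      apply eval_cancel
      intro x y
      rw [eval_const_mul, hF x y, eval_comp2']
      simp only [Matrix.map_apply, hι]
      rw [mul_inv_cancel_left₀ hdetQ]
    intro i
    apply coeinj
    have hthis := congrFun hQ i
    have hmapeq := comp2_map (PadicInt.Coe.ringHom) f h i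
    simp only [hι] at hmapeq
    push_cast
    rw [hthis, ← hmapeq]
  ------------------------------------------------------------------
  -- Step B : extract primitive h'
  ------------------------------------------------------------------
  have hvd := hv.1
  set h' : Matrix (Fin 2) (Fin 2) ℤ_[p] :=
    Matrix.of (fun i j => (hvd i j).choose) with hh'def
  have hh' : ∀ i j, h i j = (p : ℤ_[p])^v * h' i j := fun i j => (hvd i j).choose_spec
  have hsmul : h = ((p : ℤ_[p])^v) • h' := by
    ext i j; rw [Matrix.smul_apply, smul_eq_mul]; exact hh' i j
  have hprim : ∃ i j, IsUnit (h' i j) := by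
    by_contra hcon
    push_neg at hcon
    apply hv.2
    intro i j
    have hdvd : (p : ℤ_[p]) ∣ h' i j :=
      not_not.mp (fun hnd => hcon i j ((isUnit_iff_not_dvd' _).mpr hnd))
    rw [hh' i j, pow_succ]
    exact mul_dvd_mul_left _ hdvd
  -- determinant in det2 language
  have hdet2h : h.det = det2 h := by
    rw [Matrix.det_fin_two]; rfl
  have hdeth' : det2 h' ≠ 0 := by
    intro h0
    apply hdet
    rw [hdet2h, hsmul, det2_smul, h0, mul_zero]
  ------------------------------------------------------------------
  -- Step C : Id1 : det2 h' * (p^c * F0 i) = p^v * comp2 f h' i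
  ------------------------------------------------------------------
  have hdetfact : h.det = (p : ℤ_[p])^(2*v) * det2 h' := by
    rw [hdet2h, hsmul, det2_smul, ← pow_mul]
    ring_nf
  have Id1 : ∀ i, det2 h' * ((p : ℤ_[p])^c * F0 i) = (p : ℤ_[p])^v * comp2 f h' i := by
    intro i
    have t := keyA i
    rw [hF0 i, hdetfact,
      show comp2 f h i = ((p : ℤ_[p])^v)^3 * comp2 f h' i from by rw [hsmul, comp2_smul]] at t
    apply mul_left_cancel₀ (hppow (2*v))
    calc (p : ℤ_[p])^(2*v) * (det2 h' * ((p : ℤ_[p])^c * F0 i))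
        = (p : ℤ_[p])^(2*v) * det2 h' * ((p : ℤ_[p])^c * F0 i) := by ring
      _ = ((p : ℤ_[p])^v)^3 * comp2 f h' i := t
      _ = (p : ℤ_[p])^(2*v) * ((p : ℤ_[p])^v * comp2 f h' i) := by ring
  ------------------------------------------------------------------
  -- Step D : Smith decomposition h' = u * diag(1,d) * w
  ------------------------------------------------------------------
  obtain ⟨u, w, d, hu, hw, hUDW⟩ := smith2 h' hprim
  set δ := det2 u with hδdef
  set Δ := det2 w with hΔdef
  have hδ0 : δ ≠ 0 := hu.ne_zero
  have hΔ0 : Δ ≠ 0 := hw.ne_zero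
  have hdet2fact : det2 h' = δ * d * Δ := by
    rw [hUDW, det2_mul, det2_mul, det2_diag]
  have hd0 : d ≠ 0 := by
    intro h0; apply hdeth'; rw [hdet2fact, h0, mul_zero, zero_mul]
  ------------------------------------------------------------------
  -- Step E : reduce to diagonal equations
  ------------------------------------------------------------------
  set g : Fin 4 → ℤ_[p] := comp2 f w with hgdef
  set E : Fin 4 → ℤ_[p] := comp2 F0 (adj2 u) with hEdef
  have hcompsplit : comp2 f h' = comp2 (comp2 g (Matrix.of ![![1,0],![0,d]])) u := by
    rw [hUDW, comp2_mul, comp2_mul]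
  have hgD : comp2 g (Matrix.of ![![1,0],![0,d]]) = ![g 0, g 1 * d, g 2 * d^2, g 3 * d^3] :=
    comp2_diag g d
  -- Id2 : δ d Δ (p^c E i) = p^v (δ^3 * gD i)
  have Id2 : ∀ i, δ * d * Δ * ((p : ℤ_[p])^c * E i)
      = (p : ℤ_[p])^v * (δ^3 * (![g 0, g 1 * d, g 2 * d^2, g 3 * d^3]) i) := by
    have q1 : (fun i => det2 h' * ((p : ℤ_[p])^c * F0 i))
        = (fun i => (p : ℤ_[p])^v * comp2 (comp2 g (Matrix.of ![![1,0],![0,d]])) u i) := by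
      funext i
      rw [Id1 i, hcompsplit]
    have q2 := congrArg (fun q => comp2 q (adj2 u)) q1
    intro i
    have q3 := congrFun q2 i
    rw [show (fun i => det2 h' * ((p : ℤ_[p])^c * F0 i))
        = (fun i => (det2 h' * (p : ℤ_[p])^c) * F0 i) by funext j; ring] at q3
    rw [comp2_const_mul (det2 h' * (p : ℤ_[p])^c) F0 (adj2 u)] at q3
    rw [show (fun i => (p : ℤ_[p])^v * comp2 (comp2 g (Matrix.of ![![1,0],![0,d]])) u i)
        = (fun i => (p : ℤ_[p])^v * comp2 (comp2 g (Matrix.of ![![1,0],![0,d]])) u i) from rfl,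
      comp2_const_mul ((p : ℤ_[p])^v) (comp2 (comp2 g (Matrix.of ![![1,0],![0,d]])) u) (adj2 u)]
      at q3
    rw [comp2_adj2 (comp2 g (Matrix.of ![![1,0],![0,d]])) u] at q3
    rw [hgD] at q3
    rw [hdet2fact] at q3
    -- q3 : δ * d * Δ * p^c * E i = p^v * (δ^3 * gD i)
    linear_combination q3
  -- specialize and cancel units/d
  have B0 : d * (Δ * ((p : ℤ_[p])^c * E 0)) = (p : ℤ_[p])^v * (δ^2 * g 0) := by
    apply mul_left_cancel₀ hδ0
    have := Id2 0
    simp only [Matrix.cons_val_zero] at this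
    linear_combination this
  have B1 : Δ * ((p : ℤ_[p])^c * E 1) = (p : ℤ_[p])^v * (δ^2 * g 1) := by
    apply mul_left_cancel₀ hd0
    apply mul_left_cancel₀ hδ0
    have := Id2 1
    simp only [Matrix.cons_val_one, Matrix.head_cons, Matrix.cons_val_zero] at this
    linear_combination this
  have B2 : Δ * ((p : ℤ_[p])^c * E 2) = (p : ℤ_[p])^v * (δ^2 * (g 2 * d)) := by
    apply mul_left_cancel₀ hd0
    apply mul_left_cancel₀ hδ0
    have := Id2 2
    simp only [show ((![g 0, g 1 * d, g 2 * d^2, g 3 * d^3]) 2) = g 2 * d^2 by simp] at this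
    linear_combination this
  have B3 : Δ * ((p : ℤ_[p])^c * E 3) = (p : ℤ_[p])^v * (δ^2 * (g 3 * d^2)) := by
    apply mul_left_cancel₀ hd0
    apply mul_left_cancel₀ hδ0
    have := Id2 3
    simp only [show ((![g 0, g 1 * d, g 2 * d^2, g 3 * d^3]) 3) = g 3 * d^3 by simp] at this
    linear_combination this
  ------------------------------------------------------------------
  -- primitivity facts
  ------------------------------------------------------------------
  have hF0prim : ∃ i, ¬ (p : ℤ_[p]) ∣ F0 i := by
    by_contra hcon
    push_neg at hcon
    apply hc.2
    intro i
    rw [hF0 i, pow_succ]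
    exact mul_dvd_mul_left _ (hcon i)
  have hEprim : ∃ i, φ (E i) ≠ 0 := by
    by_contra hcon
    push_neg at hcon
    obtain ⟨i0, hi0⟩ := hF0prim
    apply hi0
    have hdvd : ∀ i, (p : ℤ_[p]) ∣ E i := fun i => (toZMod_eq_zero_iff' (E i)).mp (hcon i)
    set E' : Fin 4 → ℤ_[p] := fun i => (hdvd i).choose with hE'def
    have hE' : ∀ i, E i = (p : ℤ_[p]) * E' i := fun i => (hdvd i).choose_spec
    have : comp2 E u = fun i => (p : ℤ_[p]) * comp2 E' u i := by
      rw [show E = fun j => (p : ℤ_[p]) * E' j from funext hE']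
      exact comp2_const_mul _ _ _
    have h3 : (fun i => (det2 u)^3 * F0 i) = fun i => (p : ℤ_[p]) * comp2 E' u i := by
      rw [← this, hEdef, adj2_comp2]
    have h4 := congrFun h3 i0
    have h5 : (p : ℤ_[p]) ∣ δ^3 * F0 i0 := ⟨comp2 E' u i0, h4⟩
    rcases hpprime.dvd_or_dvd h5 with h6 | h6
    · exact absurd (hpprime.dvd_of_dvd_pow h6) ((isUnit_iff_not_dvd' δ).mp hu)
    · exact h6
  ------------------------------------------------------------------
  -- reductions mod p : notation
  ------------------------------------------------------------------
  have hδb : φ δ ≠ 0 := toZMod_unit_ne_zero hu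
  have hΔb : φ Δ ≠ 0 := toZMod_unit_ne_zero hw
  have hχ0 : ∀ x : ZMod p, χ x = 0 → x = 0 := by
    intro x hx
    exact hχinj (by rw [hx, map_zero])
  have hredBar : ∀ x : ℤ_[p], redBar p x = χ (φ x) := fun x => rfl
  ------------------------------------------------------------------
  -- nondegeneracy transport to g = comp2 f w
  ------------------------------------------------------------------
  have hfPat : ¬∃ P Q R S : AlgebraicClosure (ZMod p),
      (fun i => χ (φ (f i))) = pat2 P Q R S := by
    rintro ⟨P, Q, R, S, hP⟩
    apply hf.2
    refine ⟨P, Q, R, S, ?_, ?_, ?_, ?_⟩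
    · rw [hredBar, congrFun hP 0]; simp [pat2]
    · rw [hredBar, congrFun hP 1]; simp [pat2]
    · rw [hredBar, congrFun hP 2]; simp [pat2]
    · rw [hredBar, congrFun hP 3]; simp [pat2]
  set ψ : ℤ_[p] →+* AlgebraicClosure (ZMod p) := χ.comp φ with hψdef
  have hψap : ∀ x : ℤ_[p], ψ x = χ (φ x) := fun x => rfl
  have hgK : ∀ i, χ (φ (g i)) = comp2 (fun j => ψ (f j)) (w.map ψ) i := by
    intro i
    rw [← hψap, hgdef]
    exact comp2_map ψ f w i
  have hdet2wK : det2 (w.map ψ) ≠ 0 := by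
    rw [← det2_map ψ w, ← hΔdef]
    intro h0
    exact hΔb (hχ0 _ (by rw [← hψap]; exact h0))
  have hgPat : ¬∃ P Q R S : AlgebraicClosure (ZMod p),
      (fun i => χ (φ (g i))) = pat2 P Q R S := by
    rintro ⟨P, Q, R, S, hP⟩
    apply hfPat
    have hfun : comp2 (fun j => ψ (f j)) (w.map ψ) = pat2 P Q R S :=
      (funext hgK).symm.trans hP
    have hcomp := congrArg (fun q => comp2 q (adj2 (w.map ψ))) hfun
    rw [comp2_adj2, comp2_pat2] at hcomp
    set s0 : AlgebraicClosure (ZMod p) := (det2 (w.map ψ)^3)⁻¹ with hs0def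
    have hs0 : s0 * det2 (w.map ψ)^3 = 1 := inv_mul_cancel₀ (pow_ne_zero 3 hdet2wK)
    refine ⟨P * adj2 (w.map ψ) 0 0 + Q * adj2 (w.map ψ) 0 1,
      P * adj2 (w.map ψ) 1 0 + Q * adj2 (w.map ψ) 1 1,
      s0 * (R * adj2 (w.map ψ) 0 0 + S * adj2 (w.map ψ) 0 1),
      s0 * (R * adj2 (w.map ψ) 1 0 + S * adj2 (w.map ψ) 1 1), ?_⟩
    rw [← smul_pat2]
    funext i
    have hci := congrFun hcomp i
    rw [← hci, ← mul_assoc, hs0, one_mul, hψap]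
  have hN : ¬(φ (g 0) = 0 ∧ φ (g 1) = 0) := by
    rintro ⟨h0, h1⟩
    apply hgPat
    refine ⟨0, 1, χ (φ (g 2)), χ (φ (g 3)), ?_⟩
    funext i
    fin_cases i <;> simp [pat2, h0, h1]
  have hgnc : ¬ IsCube (fun i => φ (g i)) := by
    rintro ⟨α, β, γ, hα, hβγ, hA⟩
    apply hgPat
    obtain ⟨P, Q, R, S, hPQ⟩ := cub2_pat2 (χ α) (χ β) (χ γ)
    refine ⟨P, Q, R, S, ?_⟩
    rw [← hPQ]
    funext i
    rw [congrFun hA i]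
    exact map_cub2 χ α β γ i
  ------------------------------------------------------------------
  -- transport of cubes between F0 and E
  ------------------------------------------------------------------
  have hub : det2 (u.map φ) ≠ 0 := by
    rw [← det2_map φ u, ← hδdef]; exact hδb
  have hEb : ∀ i, φ (E i) = comp2 (fun j => φ (F0 j)) (adj2 (u.map φ)) i := by
    intro i
    rw [hEdef, comp2_map φ F0 (adj2 u) i, adj2_map]
  have hcubeEF : IsCube (fun i => φ (F0 i)) → IsCube (fun i => φ (E i)) := by
    intro hcube
    have := isCube_comp2 (M := adj2 (u.map φ)) (by rw [det2_adj2]; exact hub) hcube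
    rwa [show comp2 (fun j => φ (F0 j)) (adj2 (u.map φ)) = fun i => φ (E i) from
      funext fun i => (hEb i).symm] at this
  have hcubeFE : IsCube (fun i => φ (E i)) → IsCube (fun i => φ (F0 i)) := by
    intro hcube
    apply isCube_of_smul (s := det2 (u.map φ)^3) (pow_ne_zero 3 hub)
    have h1 := isCube_comp2 (M := u.map φ) hub hcube
    rwa [show comp2 (fun i => φ (E i)) (u.map φ)
        = fun i => det2 (u.map φ)^3 * φ (F0 i) from ?_] at h1
    rw [show (fun i => φ (E i)) = comp2 (fun j => φ (F0 j)) (adj2 (u.map φ)) from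
      funext hEb]
    exact adj2_comp2 _ _
  have hpack : (∃ α β γ : ZMod p, α ≠ 0 ∧ ¬(β = 0 ∧ γ = 0) ∧
        φ (F0 0) = α * β ^ 3 ∧
        φ (F0 1) = 3 * α * β ^ 2 * γ ∧
        φ (F0 2) = 3 * α * β * γ ^ 2 ∧
        φ (F0 3) = α * γ ^ 3) ↔ IsCube (fun i => φ (F0 i)) := by
    constructor
    · rintro ⟨α, β, γ, h1, h2, e0, e1, e2, e3⟩
      refine ⟨α, β, γ, h1, h2, ?_⟩
      funext i
      fin_cases i
      · simpa [cub2] using e0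
      · simpa [cub2] using e1
      · simpa [cub2] using e2
      · simpa [cub2] using e3
    · rintro ⟨α, β, γ, h1, h2, hcube⟩
      refine ⟨α, β, γ, h1, h2, ?_, ?_, ?_, ?_⟩
      · simpa [cub2] using congrFun hcube 0
      · simpa [cub2] using congrFun hcube 1
      · simpa [cub2] using congrFun hcube 2
      · simpa [cub2] using congrFun hcube 3
  ------------------------------------------------------------------
  -- v < c is impossible
  ------------------------------------------------------------------
  have hvge : c ≤ v := by
    by_contra hlt
    push_neg at hlt
    have hc' : c = v + (c - v) := by omega
    have hk0 : c - v ≠ 0 := by omega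
    have B1' := B1
    rw [hc', pow_add] at B1'
    have t1 : Δ * ((p : ℤ_[p])^(c - v) * E 1) = δ^2 * g 1 :=
      mul_left_cancel₀ (hppow v) (by linear_combination B1')
    have B0' := B0
    rw [hc', pow_add] at B0'
    have t0 : d * (Δ * ((p : ℤ_[p])^(c - v) * E 0)) = δ^2 * g 0 :=
      mul_left_cancel₀ (hppow v) (by linear_combination B0')
    apply hN
    constructor
    · have := congrArg φ t0
      simp only [map_mul, map_pow, hφp, zero_pow hk0, mul_zero, zero_mul] at this
      rcases mul_eq_zero.mp this.symm with h0 | h0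
      · exact absurd (pow_eq_zero_iff (by norm_num) |>.mp h0) hδb
      · exact h0
    · have := congrArg φ t1
      simp only [map_mul, map_pow, hφp, zero_pow hk0, mul_zero, zero_mul] at this
      rcases mul_eq_zero.mp this.symm with h0 | h0
      · exact absurd (pow_eq_zero_iff (by norm_num) |>.mp h0) hδb
      · exact h0
  ------------------------------------------------------------------
  -- main dichotomy
  ------------------------------------------------------------------
  rcases Nat.eq_or_lt_of_le hvge with heq | hlt
  · -- v = c : prove the right-hand side holds
    have hceq : v = c := heq.symm
    -- reduce the equations
    have R0 : d * (Δ * E 0) = δ^2 * g 0 := by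
      apply mul_left_cancel₀ (hppow c)
      have B0' := B0; rw [hceq] at B0'
      linear_combination B0'
    have R1 : Δ * E 1 = δ^2 * g 1 := by
      apply mul_left_cancel₀ (hppow c)
      have B1' := B1; rw [hceq] at B1'
      linear_combination B1'
    have R2 : Δ * E 2 = δ^2 * (g 2 * d) := by
      apply mul_left_cancel₀ (hppow c)
      have B2' := B2; rw [hceq] at B2'
      linear_combination B2'
    have R3 : Δ * E 3 = δ^2 * (g 3 * d^2) := by
      apply mul_left_cancel₀ (hppow c)
      have B3' := B3; rw [hceq] at B3'
      linear_combination B3'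
    have φR0 := congrArg φ R0
    have φR1 := congrArg φ R1
    have φR2 := congrArg φ R2
    have φR3 := congrArg φ R3
    simp only [map_mul, map_pow] at φR0 φR1 φR2 φR3
    have hnotcubeE : ¬ IsCube (fun i => φ (E i)) := by
      by_cases hdu : IsUnit d
      · -- d a unit : a cube for E would force a cube for g, contradiction
        have hdb : φ d ≠ 0 := toZMod_unit_ne_zero hdu
        intro hcubE
        apply hgnc
        have hDm : det2 (Matrix.of ![![φ d, 0], ![0, (1 : ZMod p)]]) = φ d := by
          simp [det2]
        have h1 : IsCube (comp2 (fun i => φ (E i)) (Matrix.of ![![φ d, 0], ![0, 1]])) :=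
          isCube_comp2 (by rw [hDm]; exact hdb) hcubE
        have h2 : (fun i => φ Δ * comp2 (fun j => φ (E j)) (Matrix.of ![![φ d, 0], ![0, 1]]) i)
            = fun i => (φ δ^2 * φ d^2) * φ (g i) := by
          funext i
          fin_cases i
          · simp only [comp2]; simp
            linear_combination (φ d)^2 * φR0
          · simp only [comp2]; simp
            linear_combination (φ d)^2 * φR1
          · simp only [comp2]; simp
            linear_combination (φ d) * φR2
          · simp only [comp2]; simp
            linear_combination φR3
        have h3 := isCube_smul hΔb h1
        rw [h2] at h3
        exact isCube_of_smul (mul_ne_zero (pow_ne_zero 2 hδb) (pow_ne_zero 2 hdb)) h3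
      · -- d not a unit : E ≡ (≠0)·x²y-ish, not a cube
        have hdb : φ d = 0 :=
          (toZMod_eq_zero_iff' d).mpr (by
            by_contra hnd
            exact hdu ((isUnit_iff_not_dvd' d).mpr hnd))
        have hE2 : φ (E 2) = 0 := by
          rw [hdb, mul_zero, mul_zero] at φR2
          rcases mul_eq_zero.mp φR2 with h0 | h0
          · exact absurd h0 hΔb
          · exact h0
        have hE3 : φ (E 3) = 0 := by
          rw [hdb] at φR3
          rw [show (0 : ZMod p)^2 = 0 from by ring, mul_zero, mul_zero] at φR3
          rcases mul_eq_zero.mp φR3 with h0 | h0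
          · exact absurd h0 hΔb
          · exact h0
        have hg1 : φ (g 1) ≠ 0 := by
          intro hg1
          apply hN
          refine ⟨?_, hg1⟩
          rw [hdb, zero_mul] at φR0
          have := φR0.symm
          rcases mul_eq_zero.mp this with h0 | h0
          · exact absurd h0 (pow_ne_zero 2 hδb)
          · exact h0
        have hE1 : φ (E 1) ≠ 0 := by
          intro h0
          rw [h0, mul_zero] at φR1
          rcases mul_eq_zero.mp φR1.symm with h1 | h1
          · exact absurd h1 (pow_ne_zero 2 hδb)
          · exact hg1 h1
        rintro ⟨α, β, γ, hα, hβγ, hcub⟩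
        have e3 : φ (E 3) = α*γ^3 := by rw [congrFun hcub 3]; simp [cub2]
        have e1 : φ (E 1) = 3*α*β^2*γ := by rw [congrFun hcub 1]; simp [cub2]
        have hγ : γ = 0 := by
          have := e3.symm.trans hE3
          rcases mul_eq_zero.mp this with h0 | h0
          · exact absurd h0 hα
          · exact pow_eq_zero_iff (by norm_num) |>.mp h0
        apply hE1
        rw [e1, hγ, mul_zero]
    constructor
    · intro _
      intro hex
      exact hnotcubeE (hcubeEF ((hpack).mp hex))
    · intro _
      exact hceq
  · -- c < v : the right-hand side fails, and so does v = c
    have hc' : v = c + (v - c) := by omega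
    have hk0 : v - c ≠ 0 := by omega
    have S1 : Δ * E 1 = (p : ℤ_[p])^(v - c) * (δ^2 * g 1) := by
      apply mul_left_cancel₀ (hppow c)
      have B1' := B1; rw [hc', pow_add] at B1'
      linear_combination B1'
    have S2 : Δ * E 2 = (p : ℤ_[p])^(v - c) * (δ^2 * (g 2 * d)) := by
      apply mul_left_cancel₀ (hppow c)
      have B2' := B2; rw [hc', pow_add] at B2'
      linear_combination B2'
    have S3 : Δ * E 3 = (p : ℤ_[p])^(v - c) * (δ^2 * (g 3 * d^2)) := by
      apply mul_left_cancel₀ (hppow c)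
      have B3' := B3; rw [hc', pow_add] at B3'
      linear_combination B3'
    have φS1 := congrArg φ S1
    have φS2 := congrArg φ S2
    have φS3 := congrArg φ S3
    simp only [map_mul, map_pow, hφp, zero_pow hk0, zero_mul] at φS1 φS2 φS3
    have hE1 : φ (E 1) = 0 := by
      rcases mul_eq_zero.mp φS1 with h0 | h0
      · exact absurd h0 hΔb
      · exact h0
    have hE2 : φ (E 2) = 0 := by
      rcases mul_eq_zero.mp φS2 with h0 | h0
      · exact absurd h0 hΔb
      · exact h0
    have hE3 : φ (E 3) = 0 := by
      rcases mul_eq_zero.mp φS3 with h0 | h0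
      · exact absurd h0 hΔb
      · exact h0
    have hE0 : φ (E 0) ≠ 0 := by
      obtain ⟨i, hi⟩ := hEprim
      fin_cases i
      · exact hi
      · exact absurd hE1 hi
      · exact absurd hE2 hi
      · exact absurd hE3 hi
    have hcubeE : IsCube (fun i => φ (E i)) := by
      refine ⟨φ (E 0), 1, 0, hE0, by simp, ?_⟩
      funext i
      fin_cases i <;> simp [cub2, hE1, hE2, hE3]
    constructor
    · intro hveq
      omega
    · intro hnc
      exact absurd (hpack.mpr (hcubeFE hcubeE)) hnc
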